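/- Fix finite nonempty sets Θ, Ω, A, and let C° be the set of pairs (u,μ) ∈ ℝ^{Θ×Ω×A} × Δ(Ω×Θ) with μ(ω) > 0 for every ω ∈ Ω, equipped with the standard topology. Then the optimal Pricing Mappings revenue R_c : C° → ℝ is continuous. -/

import Mathlib

open Finset Filter

noncomputable section

variable {Θ Ω A : Type*}

/-- `p` is a probability distribution on the finite set `Ω`. -/
def IsDist [Fintype Ω] (p : Ω → ℝ) : Prop :=
  (∀ ω, 0 ≤ p ω) ∧ ∑ ω, p ω = 1

/-- `μ` is a joint probability distribution on `Ω × Θ`. -/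
def IsJoint [Fintype Ω] [Fintype Θ] (μ : Ω → Θ → ℝ) : Prop :=
  (∀ ω θ, 0 ≤ μ ω θ) ∧ ∑ ω, ∑ θ, μ ω θ = 1

/-- The marginal `μ(ω) = ∑_θ μ(ω,θ)` of a joint distribution. -/
def margO [Fintype Θ] (μ : Ω → Θ → ℝ) (ω : Ω) : ℝ := ∑ θ, μ ω θ

/-- The marginal `μ(θ) = ∑_ω μ(ω,θ)` of a joint distribution. -/
def margT [Fintype Ω] (μ : Ω → Θ → ℝ) (θ : Θ) : ℝ := ∑ ω, μ ω θ

/-- The value function `v_θ(q) = max_{a ∈ A} ∑_ω q(ω)·u(θ,ω,a)`. -/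
def vfun [Fintype Ω] [Fintype A] [Nonempty A] (u : Θ → Ω → A → ℝ) (θ : Θ) (q : Ω → ℝ) : ℝ :=
  univ.sup' univ_nonempty fun a => ∑ ω, q ω * u θ ω a

/-- The matrix-vector product `D_θ q`, where `D_θ` is the diagonal matrix with entries
`μ(θ|ω) = μ(ω,θ)/μ(ω)`. -/
def Dq [Fintype Θ] (μ : Ω → Θ → ℝ) (θ : Θ) (q : Ω → ℝ) : Ω → ℝ :=
  fun ω => μ ω θ / margO μ ω * q ω

/-- `1ᵀ D_θ q`. -/
def onesD [Fintype Θ] [Fintype Ω] (μ : Ω → Θ → ℝ) (θ : Θ) (q : Ω → ℝ) : ℝ :=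
  ∑ ω, Dq μ θ q ω

/-- A feasible signal-representation for prior `pr`: a finitely supported distribution over
posteriors (each posterior being a distribution on `Ω`) averaging to the prior. -/
def FeasRep [Fintype Ω] (pr : Ω → ℝ) (x : (Ω → ℝ) →₀ ℝ) : Prop :=
  (∀ q ∈ x.support, IsDist q) ∧ (∀ q, 0 ≤ x q) ∧
  (∑ q ∈ x.support, x q = 1) ∧ ∀ ω, ∑ q ∈ x.support, x q * q ω = pr ω

variable [Fintype Θ] [Fintype Ω] [Fintype A] [Nonempty A]

/-- Expected value `∑_q v_θ(D_θ q)·x(q)` that a type-`θ` buyer gets from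
signal representation `x`. -/
def PMutil (u : Θ → Ω → A → ℝ) (μ : Ω → Θ → ℝ) (θ : Θ) (x : (Ω → ℝ) →₀ ℝ) : ℝ :=
  ∑ q ∈ x.support, vfun u θ (Dq μ θ q) * x q

/-- Validity (IR and IC) of a Pricing Mappings menu `{(x_θ, t_θ)}`. -/
def PMvalid (u : Θ → Ω → A → ℝ) (μ : Ω → Θ → ℝ)
    (x : Θ → ((Ω → ℝ) →₀ ℝ)) (t : Θ → ℝ) : Prop :=
  (∀ θ, FeasRep (margO μ) (x θ)) ∧ (∀ θ, 0 ≤ t θ) ∧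
  (∀ θ, vfun u θ (Dq μ θ (margO μ)) ≤ PMutil u μ θ (x θ) - margT μ θ * t θ) ∧
  (∀ θ θ', θ' ≠ θ →
    PMutil u μ θ (x θ') - margT μ θ * t θ' ≤ PMutil u μ θ (x θ) - margT μ θ * t θ)

/-- Revenue `∑_θ μ(θ)·t_θ` of a Pricing Mappings menu. -/
def PMrev (μ : Ω → Θ → ℝ) (t : Θ → ℝ) : ℝ := ∑ θ, margT μ θ * t θ

/-- `R_c(u,μ)`: the supremum of revenues of valid Pricing Mappings menus. -/
def Rc (u : Θ → Ω → A → ℝ) (μ : Ω → Θ → ℝ) : ℝ :=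
  sSup {r | ∃ x t, PMvalid u μ x t ∧ r = PMrev μ t}

/-- Net utility `∑_q [v_θ(D_θ q)·x(q) − (1ᵀD_θ q)·t̃(q)]` of a type-`θ` buyer
from a Pricing Outcomes contract `(x, tt)`. -/
def POutil (u : Θ → Ω → A → ℝ) (μ : Ω → Θ → ℝ) (θ : Θ)
    (x tt : (Ω → ℝ) →₀ ℝ) : ℝ :=
  ∑ q ∈ x.support ∪ tt.support,
    (vfun u θ (Dq μ θ q) * x q - onesD μ θ q * tt q)

/-- Validity (feasibility, payments supported on signals, IR and IC) of a Pricing Outcomes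
menu `{(x_θ, t̃_θ)}`. -/
def POvalid (u : Θ → Ω → A → ℝ) (μ : Ω → Θ → ℝ)
    (x tt : Θ → ((Ω → ℝ) →₀ ℝ)) : Prop :=
  (∀ θ, FeasRep (margO μ) (x θ)) ∧ (∀ θ, (tt θ).support ⊆ (x θ).support) ∧
  (∀ θ, vfun u θ (Dq μ θ (margO μ)) ≤ POutil u μ θ (x θ) (tt θ)) ∧
  (∀ θ θ', θ' ≠ θ →
    POutil u μ θ (x θ') (tt θ') ≤ POutil u μ θ (x θ) (tt θ))

/-- Revenue `∑_θ ∑_q (1ᵀD_θ q)·t̃_θ(q)` of a Pricing Outcomes menu. -/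
def POrev (μ : Ω → Θ → ℝ) (tt : Θ → ((Ω → ℝ) →₀ ℝ)) : ℝ :=
  ∑ θ, ∑ q ∈ (tt θ).support, onesD μ θ q * tt θ q

/-- `R(u,μ)`: the supremum of revenues of valid Pricing Outcomes menus. -/
def Rfull (u : Θ → Ω → A → ℝ) (μ : Ω → Θ → ℝ) : ℝ :=
  sSup {r | ∃ x tt, POvalid u μ x tt ∧ r = POrev μ tt}

/-- `R_p(u,μ)`: the supremum of revenues of valid Pricing Outcomes menus with no positive
transfers to the buyer, i.e. all payments nonnegative. -/
def Rp (u : Θ → Ω → A → ℝ) (μ : Ω → Θ → ℝ) : ℝ :=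
  sSup {r | ∃ x tt, POvalid u μ x tt ∧ (∀ θ q, 0 ≤ tt θ q) ∧ r = POrev μ tt}

/-- `max_a u(θ,ω,a)`. -/
def maxU (u : Θ → Ω → A → ℝ) (θ : Θ) (ω : Ω) : ℝ :=
  univ.sup' univ_nonempty fun a => u θ ω a

/-- The buyer surplus
`σ(θ) = ∑_ω μ(ω|θ)·max_a u(θ,ω,a) − max_a ∑_ω μ(ω|θ)·u(θ,ω,a)`. -/
def surplus (u : Θ → Ω → A → ℝ) (μ : Ω → Θ → ℝ) (θ : Θ) : ℝ :=
  ∑ ω, μ ω θ / margT μ θ * maxU u θ ω -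
    univ.sup' univ_nonempty fun a => ∑ ω, μ ω θ / margT μ θ * u θ ω a

/-- The full surplus `∑_θ μ(θ)·σ(θ)`. -/
def fullSurplus (u : Θ → Ω → A → ℝ) (μ : Ω → Θ → ℝ) : ℝ :=
  ∑ θ, margT μ θ * surplus u μ θ

/-- The sealed-envelope revenue `R_e(u,μ) = sup_{t ≥ 0} t·∑_{θ : μ(θ)>0, σ(θ) ≥ t} μ(θ)`. -/
def Re (u : Θ → Ω → A → ℝ) (μ : Ω → Θ → ℝ) : ℝ :=
  sSup {r | ∃ t : ℝ, 0 ≤ t ∧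
    r = t * ∑ θ, (if 0 < margT μ θ ∧ t ≤ surplus u μ θ then margT μ θ else 0)}

/-- The cell of the simplex on which, for each type `θ`, action `α θ` is optimal:
on this polytope every `v_θ` is linear. -/
def cellPM (u : Θ → Ω → A → ℝ) (α : Θ → A) : Set (Ω → ℝ) :=
  {q | IsDist q ∧ ∀ θ a, ∑ ω, q ω * u θ ω a ≤ ∑ ω, q ω * u θ ω (α θ)}

/-- `Q*(u)`: the set of vertices (extreme points) of the cells of the partition of the simplex
into polytopes on which every `v_θ` is linear. -/
def Qstar (u : Θ → Ω → A → ℝ) : Set (Ω → ℝ) :=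
  ⋃ α : Θ → A, Set.extremePoints ℝ (cellPM u α)

/-- The cell of the simplex on which, for each type `θ`, action `α θ` is optimal for the
transformed posterior `D_θ q`: on this polytope every `q ↦ v_θ(D_θ q)` is linear. -/
def cellPO (u : Θ → Ω → A → ℝ) (μ : Ω → Θ → ℝ) (α : Θ → A) : Set (Ω → ℝ) :=
  {q | IsDist q ∧ ∀ θ a, ∑ ω, Dq μ θ q ω * u θ ω a ≤ ∑ ω, Dq μ θ q ω * u θ ω (α θ)}

/-- `Q*(u,μ)`: the set of vertices (extreme points) of the cells of the partition of the simplex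
into polytopes on which every `q ↦ v_θ(D_θ q)` is linear. -/
def QstarD (u : Θ → Ω → A → ℝ) (μ : Ω → Θ → ℝ) : Set (Ω → ℝ) :=
  ⋃ α : Θ → A, Set.extremePoints ℝ (cellPO u μ α)

/-- The point mass at `ω`, as an element of `Δ(Ω)`. -/
def deltaP [DecidableEq Ω] (ω : Ω) : Ω → ℝ := fun ω' => if ω' = ω then 1 else 0

/-- The full-revelation signal representation: posterior `δ_ω` with probability `μ(ω)`. -/
def fullX [DecidableEq Ω] (μ : Ω → Θ → ℝ) : (Ω → ℝ) →₀ ℝ :=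
  ∑ ω, Finsupp.single (deltaP ω) (margO μ ω)

/-- The full-revelation payment function: `t̃(δ_ω) = μ(ω)·t(ω)`. -/
def fullT [DecidableEq Ω] (μ : Ω → Θ → ℝ) (t : Ω → ℝ) : (Ω → ℝ) →₀ ℝ :=
  ∑ ω, Finsupp.single (deltaP ω) (margO μ ω * t ω)

section Helpers
set_option linter.unusedSectionVars false

variable {u u' : Θ → Ω → A → ℝ} {μ μ' : Ω → Θ → ℝ}

lemma sum_support_ext (z : (Ω → ℝ) →₀ ℝ) {S : Finset (Ω → ℝ)} (hS : z.support ⊆ S)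
    (F : (Ω → ℝ) → ℝ) (hF : ∀ q, z q = 0 → F q = 0) :
    ∑ q ∈ z.support, F q = ∑ q ∈ S, F q :=
  Finset.sum_subset hS fun q _ hq => hF q (Finsupp.notMem_support_iff.mp hq)

lemma margT_nonneg (hμ : IsJoint μ) (θ : Θ) : 0 ≤ margT μ θ :=
  Finset.sum_nonneg fun ω _ => hμ.1 ω θ

lemma sum_margT (hμ : IsJoint μ) : ∑ θ, margT μ θ = 1 := by
  rw [← hμ.2]; exact Finset.sum_comm

lemma margT_le_one (hμ : IsJoint μ) (θ : Θ) : margT μ θ ≤ 1 := by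
  rw [← sum_margT hμ]
  exact Finset.single_le_sum (fun θ' _ => margT_nonneg hμ θ') (mem_univ θ)

lemma mu_le_margT (hμ : IsJoint μ) (ω : Ω) (θ : Θ) : μ ω θ ≤ margT μ θ :=
  Finset.single_le_sum (fun ω' _ => hμ.1 ω' θ) (mem_univ ω)

lemma isDist_margO (hμ : IsJoint μ) : IsDist (margO μ) :=
  ⟨fun ω => Finset.sum_nonneg fun θ _ => hμ.1 ω θ, hμ.2⟩

lemma isDist_le_one {q : Ω → ℝ} (hq : IsDist q) (ω : Ω) : q ω ≤ 1 := by
  rw [← hq.2]; exact Finset.single_le_sum (fun ω' _ => hq.1 ω') (mem_univ ω)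

lemma vfun_le {θ : Θ} {q : Ω → ℝ} {c : ℝ}
    (h : ∀ a, ∑ ω, q ω * u θ ω a ≤ c) : vfun u θ q ≤ c := by
  rw [vfun]; exact Finset.sup'_le _ _ fun a _ => h a

lemma le_vfun {θ : Θ} {q : Ω → ℝ} (a : A) : ∑ ω, q ω * u θ ω a ≤ vfun u θ q := by
  rw [vfun]; exact Finset.le_sup' (fun a => ∑ ω, q ω * u θ ω a) (mem_univ a)

lemma abs_vfun_le {θ : Θ} {q : Ω → ℝ} {c : ℝ}
    (h : ∀ a, |∑ ω, q ω * u θ ω a| ≤ c) : |vfun u θ q| ≤ c := by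
  rw [abs_le]
  constructor
  · obtain ⟨a⟩ := ‹Nonempty A›
    have h1 := (abs_le.1 (h a)).1
    have h2 := le_vfun (u := u) (θ := θ) (q := q) a
    linarith
  · exact vfun_le fun a => (abs_le.1 (h a)).2

lemma abs_vfun_sub_le {θ : Θ} {q q' : Ω → ℝ} {c : ℝ}
    (h : ∀ a, |∑ ω, q ω * u θ ω a - ∑ ω, q' ω * u' θ ω a| ≤ c) :
    |vfun u θ q - vfun u' θ q'| ≤ c := by
  rw [abs_le]
  constructor
  · rw [neg_le, neg_sub]
    have : ∀ a, ∑ ω, q' ω * u' θ ω a ≤ vfun u θ q + c := fun a => by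
      have h1 := (abs_le.1 (h a)).1
      have h2 := le_vfun (u := u) (θ := θ) (q := q) a
      linarith
    have := vfun_le this
    linarith
  · rw [sub_le_iff_le_add]
    have : ∀ a, ∑ ω, q ω * u θ ω a ≤ vfun u' θ q' + c := fun a => by
      have h1 := (abs_le.1 (h a)).2
      have h2 := le_vfun (u := u') (θ := θ) (q := q') a
      linarith
    have := vfun_le this
    linarith

end Helpers
/-- normalized coefficient function -/
def Wfun (u : Θ → Ω → A → ℝ) (μ : Ω → Θ → ℝ) : Θ → Ω → A → ℝ :=
  fun θ ω a => μ ω θ * u θ ω a / (margT μ θ * margO μ ω)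

section Helpers2
set_option linter.unusedSectionVars false
variable {u u' : Θ → Ω → A → ℝ} {μ μ' : Ω → Θ → ℝ}

lemma vfun_Dq_div {θ : Θ} (hm : 0 < margT μ θ) (q : Ω → ℝ) :
    vfun u θ (Dq μ θ q) / margT μ θ = vfun (Wfun u μ) θ q := by
  have key := Finset.comp_sup'_eq_sup'_comp (s := (univ : Finset A))
    (f := fun a => ∑ ω, Dq μ θ q ω * u θ ω a) univ_nonempty
    (fun z : ℝ => z / margT μ θ) (fun x y => (max_div_div_right hm.le x y).symm)
  rw [vfun, vfun, key]
  apply Finset.sup'_congr _ rfl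
  intro a _
  rw [Function.comp_apply, Finset.sum_div]
  refine Finset.sum_congr rfl fun ω _ => ?_
  simp only [Dq, Wfun, div_eq_mul_inv, mul_inv]
  ring

lemma abs_weighted_le {ι : Type*} {sf : Finset ι} {f w : ι → ℝ} {C M : ℝ}
    (hf : ∀ q ∈ sf, |f q| ≤ C) (hw : ∀ q ∈ sf, 0 ≤ w q) (hM : ∑ q ∈ sf, w q = M) :
    |∑ q ∈ sf, f q * w q| ≤ C * M := by
  calc |∑ q ∈ sf, f q * w q| ≤ ∑ q ∈ sf, |f q * w q| := Finset.abs_sum_le_sum_abs _ _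
    _ ≤ ∑ q ∈ sf, C * w q := Finset.sum_le_sum fun q hq => by
        rw [abs_mul, abs_of_nonneg (hw q hq)]
        exact mul_le_mul_of_nonneg_right (hf q hq) (hw q hq)
    _ = C * M := by rw [← Finset.mul_sum, hM]

lemma abs_weighted_le' {ι : Type*} {sf : Finset ι} {f w : ι → ℝ} {C M : ℝ}
    (hf : ∀ q ∈ sf, |f q| ≤ C) (hw : ∀ q ∈ sf, 0 ≤ w q) (hM : ∑ q ∈ sf, w q = M) :
    |∑ q ∈ sf, w q * f q| ≤ C * M := by
  have : ∑ q ∈ sf, w q * f q = ∑ q ∈ sf, f q * w q :=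
    Finset.sum_congr rfl fun q _ => mul_comm _ _
  rw [this]; exact abs_weighted_le hf hw hM

lemma abs_vfun_W_le {W : Θ → Ω → A → ℝ} {θ : Θ} {q : Ω → ℝ} {C : ℝ} (hq : IsDist q)
    (hW : ∀ ω a, |W θ ω a| ≤ C) : |vfun W θ q| ≤ C := by
  apply abs_vfun_le
  intro a
  have := abs_weighted_le' (sf := univ) (f := fun ω => W θ ω a) (w := q)
    (fun ω _ => hW ω a) (fun ω _ => hq.1 ω) hq.2
  simpa using this

lemma abs_vfun_W_sub_le {W W' : Θ → Ω → A → ℝ} {θ : Θ} {q : Ω → ℝ} {c : ℝ} (hq : IsDist q)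
    (hWW : ∀ ω a, |W θ ω a - W' θ ω a| ≤ c) : |vfun W θ q - vfun W' θ q| ≤ c := by
  apply abs_vfun_sub_le
  intro a
  have h1 : ∑ ω, q ω * W θ ω a - ∑ ω, q ω * W' θ ω a
      = ∑ ω, q ω * (W θ ω a - W' θ ω a) := by
    rw [← Finset.sum_sub_distrib]; exact Finset.sum_congr rfl fun ω _ => by ring
  rw [h1]
  have := abs_weighted_le' (sf := univ) (f := fun ω => W θ ω a - W' θ ω a) (w := q)
    (fun ω _ => hWW ω a) (fun ω _ => hq.1 ω) hq.2
  simpa using this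

lemma abs_vfun_W_lip {W : Θ → Ω → A → ℝ} {θ : Θ} {q q' : Ω → ℝ} {C : ℝ}
    (hW : ∀ ω a, |W θ ω a| ≤ C) : |vfun W θ q - vfun W θ q'| ≤ C * ∑ ω, |q ω - q' ω| := by
  apply abs_vfun_sub_le
  intro a
  have h1 : ∑ ω, q ω * W θ ω a - ∑ ω, q' ω * W θ ω a
      = ∑ ω, (q ω - q' ω) * W θ ω a := by
    rw [← Finset.sum_sub_distrib]; exact Finset.sum_congr rfl fun ω _ => by ring
  rw [h1]
  calc |∑ ω, (q ω - q' ω) * W θ ω a| ≤ ∑ ω, |(q ω - q' ω) * W θ ω a| :=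
        Finset.abs_sum_le_sum_abs _ _
    _ ≤ ∑ ω, C * |q ω - q' ω| := Finset.sum_le_sum fun ω _ => by
        rw [abs_mul, mul_comm]
        exact mul_le_mul_of_nonneg_right (hW ω a) (abs_nonneg _)
    _ = C * ∑ ω, |q ω - q' ω| := by rw [← Finset.mul_sum]

lemma abs_Wfun_le (hμ : IsJoint μ) {Mu mp : ℝ} (hMu : ∀ θ ω a, |u θ ω a| ≤ Mu)
    (hmp : 0 < mp) (hp : ∀ ω, mp ≤ margO μ ω) {θ : Θ} (hm : 0 < margT μ θ)
    (ω : Ω) (a : A) : |Wfun u μ θ ω a| ≤ Mu / mp := by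
  have hp0 : 0 < margO μ ω := lt_of_lt_of_le hmp (hp ω)
  have hMu0 : 0 ≤ Mu := le_trans (abs_nonneg _) (hMu θ ω a)
  rw [Wfun, abs_div, abs_mul, abs_of_nonneg (hμ.1 ω θ),
    abs_of_pos (mul_pos hm hp0)]
  calc μ ω θ * |u θ ω a| / (margT μ θ * margO μ ω)
      ≤ margT μ θ * Mu / (margT μ θ * mp) := by
        apply div_le_div₀ (by positivity)
          (mul_le_mul (mu_le_margT hμ ω θ) (hMu θ ω a) (abs_nonneg _) hm.le)
          (by positivity)
          (mul_le_mul_of_nonneg_left (hp ω) hm.le)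
    _ = Mu / mp := by rw [mul_div_mul_left _ _ hm.ne']

end Helpers2
section Helpers3
set_option linter.unusedSectionVars false
variable {u u' : Θ → Ω → A → ℝ} {μ μ' : Ω → Θ → ℝ}

lemma PMutil_single (u : Θ → Ω → A → ℝ) (μ : Ω → Θ → ℝ) (θ : Θ) (q : Ω → ℝ) (c : ℝ) :
    PMutil u μ θ (Finsupp.single q c) = vfun u θ (Dq μ θ q) * c := by
  classical
  rcases eq_or_ne c 0 with h | h
  · simp [PMutil, h]
  · rw [PMutil, Finsupp.support_single_ne_zero _ h, Finset.sum_singleton,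
      Finsupp.single_eq_same]

lemma mix_support (x : (Ω → ℝ) →₀ ℝ) (qh : Ω → ℝ) (e : ℝ) :
    ((1 - e) • x + Finsupp.single qh e).support ⊆ insert qh x.support := by
  classical
  intro q hq
  rcases Finset.mem_union.1 (Finsupp.support_add hq) with h | h
  · exact Finset.mem_insert_of_mem (Finsupp.support_smul h)
  · have : q = qh := Finset.mem_singleton.1 (Finsupp.support_single_subset h)
    rw [this]; exact Finset.mem_insert_self _ _
  
lemma sum_mix (x : (Ω → ℝ) →₀ ℝ) (qh : Ω → ℝ) (e : ℝ) (G : (Ω → ℝ) → ℝ) :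
    ∑ q ∈ ((1 - e) • x + Finsupp.single qh e).support,
        G q * ((1 - e) • x + Finsupp.single qh e) q
      = (1 - e) * ∑ q ∈ x.support, G q * x q + G qh * e := by
  classical
  set z := (1 - e) • x + Finsupp.single qh e with hz
  rw [sum_support_ext z (mix_support x qh e) _ (fun q h => by rw [h, mul_zero])]
  have happ : ∀ q, z q = (1 - e) * x q + (if qh = q then e else 0) := by
    intro q
    rw [hz, Finsupp.add_apply, Finsupp.smul_apply, smul_eq_mul, Finsupp.single_apply]
  have : ∀ q, G q * z q = (1 - e) * (G q * x q) + (if qh = q then G q * e else 0) := by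
    intro q; rw [happ q]; split <;> ring
  rw [Finset.sum_congr rfl fun q _ => this q, Finset.sum_add_distrib, ← Finset.mul_sum,
    Finset.sum_ite_eq _ qh (fun q => G q * e), if_pos (Finset.mem_insert_self _ _)]
  congr 1
  rw [sum_support_ext x (Finset.subset_insert qh x.support) _ (fun q h => by rw [h, mul_zero])]

lemma PMutil_mix (u : Θ → Ω → A → ℝ) (μ : Ω → Θ → ℝ) (θ : Θ) (x : (Ω → ℝ) →₀ ℝ)
    (qh : Ω → ℝ) (e : ℝ) :
    PMutil u μ θ ((1 - e) • x + Finsupp.single qh e)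
      = (1 - e) * PMutil u μ θ x + vfun u θ (Dq μ θ qh) * e :=
  sum_mix x qh e _

lemma FeasRep_single {pr : Ω → ℝ} (h : IsDist pr) : FeasRep pr (Finsupp.single pr 1) := by
  classical
  refine ⟨?_, ?_, ?_, ?_⟩
  · intro q hq
    rw [Finsupp.support_single_ne_zero _ one_ne_zero, Finset.mem_singleton] at hq
    rwa [hq]
  · intro q; rw [Finsupp.single_apply]; split <;> norm_num
  · rw [Finsupp.support_single_ne_zero _ one_ne_zero, Finset.sum_singleton,
      Finsupp.single_eq_same]
  · intro ω
    rw [Finsupp.support_single_ne_zero _ one_ne_zero, Finset.sum_singleton,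
      Finsupp.single_eq_same, one_mul]

lemma FeasRep_mix {p p' : Ω → ℝ} {x : (Ω → ℝ) →₀ ℝ} (hx : FeasRep p x) {qh : Ω → ℝ}
    (hqh : IsDist qh) {e : ℝ} (he0 : 0 ≤ e) (he1 : e ≤ 1)
    (hmixid : ∀ ω, (1 - e) * p ω + qh ω * e = p' ω) :
    FeasRep p' ((1 - e) • x + Finsupp.single qh e) := by
  classical
  refine ⟨?_, ?_, ?_, ?_⟩
  · intro q hq
    rcases Finset.mem_insert.1 (mix_support x qh e hq) with h | h
    · rwa [h]
    · exact hx.1 q h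
  · intro q
    rw [Finsupp.add_apply, Finsupp.smul_apply, smul_eq_mul, Finsupp.single_apply]
    have := hx.2.1 q
    split <;> nlinarith
  · have := sum_mix x qh e (fun _ => 1)
    simp only [one_mul] at this
    rw [this, hx.2.2.1]; ring
  · intro ω
    have h1 : ∀ (z : (Ω → ℝ) →₀ ℝ), ∑ q ∈ z.support, z q * q ω
        = ∑ q ∈ z.support, (fun q : Ω → ℝ => q ω) q * z q :=
      fun z => Finset.sum_congr rfl fun q _ => mul_comm _ _
    rw [h1, sum_mix x qh e (fun q : Ω → ℝ => q ω), ← h1, hx.2.2.2 ω, hmixid ω]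

lemma PMutil_div {θ : Θ} {x : (Ω → ℝ) →₀ ℝ} (hm : 0 < margT μ θ) :
    PMutil u μ θ x / margT μ θ = ∑ q ∈ x.support, vfun (Wfun u μ) θ q * x q := by
  rw [PMutil, Finset.sum_div]
  refine Finset.sum_congr rfl fun q _ => ?_
  rw [mul_div_right_comm, vfun_Dq_div hm]

lemma abs_PMutil_div_le {θ : Θ} {x : (Ω → ℝ) →₀ ℝ} {pr : Ω → ℝ} (hx : FeasRep pr x)
    (hm : 0 < margT μ θ) {C : ℝ} (hW : ∀ ω a, |Wfun u μ θ ω a| ≤ C) :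
    |PMutil u μ θ x / margT μ θ| ≤ C := by
  rw [PMutil_div hm]
  have := abs_weighted_le (sf := x.support) (f := fun q => vfun (Wfun u μ) θ q) (w := fun q => x q)
    (fun q hq => abs_vfun_W_le (hx.1 q hq) hW) (fun q _ => hx.2.1 q) hx.2.2.1
  simpa using this

lemma price_le_of_valid {x : Θ → (Ω → ℝ) →₀ ℝ} {t : Θ → ℝ} (hval : PMvalid u μ x t)
    (hμ : IsJoint μ) {Mu mp : ℝ} (hMu : ∀ θ ω a, |u θ ω a| ≤ Mu) (hmp : 0 < mp)
    (hp : ∀ ω, mp ≤ margO μ ω) {θ : Θ} (hm : 0 < margT μ θ) : t θ ≤ 2 * Mu / mp := by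
  have hW : ∀ ω a, |Wfun u μ θ ω a| ≤ Mu / mp := abs_Wfun_le hμ hMu hmp hp hm
  have hIR := hval.2.2.1 θ
  have h1 : |PMutil u μ θ (x θ) / margT μ θ| ≤ Mu / mp :=
    abs_PMutil_div_le (hval.1 θ) hm hW
  have h2 : |vfun u θ (Dq μ θ (margO μ)) / margT μ θ| ≤ Mu / mp := by
    rw [vfun_Dq_div hm]
    exact abs_vfun_W_le (isDist_margO hμ) hW
  have h3 : t θ ≤ PMutil u μ θ (x θ) / margT μ θ
      - vfun u θ (Dq μ θ (margO μ)) / margT μ θ := by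
    rw [div_sub_div_same, le_div_iff₀ hm]
    linarith
  have := abs_le.1 h1
  have := abs_le.1 h2
  rw [show (2:ℝ) * Mu / mp = Mu / mp + Mu / mp by ring]
  linarith [(abs_le.1 h1).2, (abs_le.1 h2).1]

lemma null_valid (u : Θ → Ω → A → ℝ) (hμ : IsJoint μ) :
    PMvalid u μ (fun _ => Finsupp.single (margO μ) 1) (fun _ => 0) := by
  refine ⟨fun _ => FeasRep_single (isDist_margO hμ), fun _ => le_refl 0,
    fun θ => ?_, fun θ θ' _ => ?_⟩
  · rw [PMutil_single]; simp
  · simp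

lemma rev_le_of_valid {x : Θ → (Ω → ℝ) →₀ ℝ} {t : Θ → ℝ} (hval : PMvalid u μ x t)
    (hμ : IsJoint μ) {Mu mp : ℝ} (hMu : ∀ θ ω a, |u θ ω a| ≤ Mu) (hmp : 0 < mp)
    (hp : ∀ ω, mp ≤ margO μ ω) : PMrev μ t ≤ 2 * Mu / mp := by
  rw [PMrev]
  calc ∑ θ, margT μ θ * t θ ≤ ∑ θ, margT μ θ * (2 * Mu / mp) := by
        refine Finset.sum_le_sum fun θ _ => ?_
        rcases lt_or_eq_of_le (margT_nonneg hμ θ) with hm | hm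
        · exact mul_le_mul_of_nonneg_left (price_le_of_valid hval hμ hMu hmp hp hm) hm.le
        · rw [← hm, zero_mul, zero_mul]
    _ = 2 * Mu / mp := by rw [← Finset.sum_mul, sum_margT hμ, one_mul]

lemma Rc_set_nonempty (u : Θ → Ω → A → ℝ) (hμ : IsJoint μ) :
    {r | ∃ x t, PMvalid u μ x t ∧ r = PMrev μ t}.Nonempty := by
  refine ⟨PMrev μ (fun _ => 0), fun _ => Finsupp.single (margO μ) 1, fun _ => 0,
    null_valid u hμ, rfl⟩

lemma Rc_set_bdd (u : Θ → Ω → A → ℝ) (hμ : IsJoint μ) {Mu mp : ℝ}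
    (hMu : ∀ θ ω a, |u θ ω a| ≤ Mu) (hmp : 0 < mp) (hp : ∀ ω, mp ≤ margO μ ω) :
    BddAbove {r | ∃ x t, PMvalid u μ x t ∧ r = PMrev μ t} := by
  refine ⟨2 * Mu / mp, fun r hr => ?_⟩
  obtain ⟨x, t, hval, rfl⟩ := hr
  exact rev_le_of_valid hval hμ hMu hmp hp

end Helpers3
section Core
set_option linter.unusedSectionVars false
set_option maxHeartbeats 1000000

lemma core_transfer
    {u u' : Θ → Ω → A → ℝ} {μ μ' : Ω → Θ → ℝ}
    (hμ : IsJoint μ) (hμ' : IsJoint μ')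
    {x : Θ → (Ω → ℝ) →₀ ℝ} {t : Θ → ℝ} (hval : PMvalid u μ x t)
    {Mu mp s e dp : ℝ} {γ : Θ → ℝ}
    (hMu0 : 0 ≤ Mu)
    (hMu : ∀ θ ω a, |u θ ω a| ≤ Mu) (hMu' : ∀ θ ω a, |u' θ ω a| ≤ Mu)
    (hmp : 0 < mp) (hp : ∀ ω, mp ≤ margO μ ω) (hp' : ∀ ω, mp ≤ margO μ' ω)
    (hs : 0 < s) (hs1 : s ≤ 1) (he : 0 < e) (he1 : e ≤ 1)
    (hmix : ∀ ω, (1 - e) * margO μ ω ≤ margO μ' ω)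
    (hdp0 : 0 ≤ dp) (hdp : ∑ ω, |margO μ' ω - margO μ ω| ≤ dp)
    (hγ : ∀ θ, 0 ≤ γ θ)
    (hΓ : ∀ θ, 0 < margT μ θ → 0 < margT μ' θ → ∀ ω a,
        |Wfun u' μ' θ ω a - Wfun u μ θ ω a| ≤ γ θ) :
    ∃ y r, PMvalid u' μ' y r ∧
      ∀ θ, 0 < margT μ θ → 0 < margT μ' θ →
        margT μ θ * t θ
          - (|margT μ' θ - margT μ θ| * (2 * Mu / mp) + s * (2 * Mu / mp)
             + 2 * (γ θ + 2 * e * (Mu / mp) + dp * (Mu / mp)) / s)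
          ≤ margT μ' θ * r θ := by
  classical
  obtain ⟨hfeas, ht0, hIR, hIC⟩ := hval
  have hpd : IsDist (margO μ) := isDist_margO hμ
  have hpd' : IsDist (margO μ') := isDist_margO hμ'
  set qh : Ω → ℝ := fun ω => (margO μ' ω - (1 - e) * margO μ ω) / e with hqh
  have hqhd : IsDist qh := by
    constructor
    · intro ω
      apply div_nonneg _ he.le
      linarith [hmix ω]
    · rw [hqh, ← Finset.sum_div, Finset.sum_sub_distrib, ← Finset.mul_sum, hpd'.2, hpd.2]
      field_simp
      ring
  set Xn : Option Θ → ((Ω → ℝ) →₀ ℝ) := fun o =>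
    Option.elim o (Finsupp.single (margO μ') 1)
      (fun β => (1 - e) • x β + Finsupp.single qh e) with hXn
  set tn : Option Θ → ℝ := fun o => Option.elim o 0 t with htn
  have htn0 : ∀ o, 0 ≤ tn o := fun o => by
    cases o with
    | none => exact le_refl 0
    | some β => exact ht0 β
  have hfeasXn : ∀ o, FeasRep (margO μ') (Xn o) := by
    intro o
    cases o with
    | none => exact FeasRep_single hpd'
    | some β =>
        refine FeasRep_mix (hfeas β) hqhd he.le he1 (fun ω => ?_)
        rw [hqh]
        field_simp
        ring
  set U : Θ → Option Θ → ℝ := fun θ o =>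
    PMutil u' μ' θ (Xn o) - margT μ' θ * ((1 - s) * tn o) with hU
  have hbest : ∀ θ, ∃ o, ∀ o', U θ o' ≤ U θ o := fun θ => by
    obtain ⟨o, -, h⟩ := Finset.exists_max_image (univ : Finset (Option Θ)) (U θ)
      ⟨none, Finset.mem_univ _⟩
    exact ⟨o, fun o' => h o' (Finset.mem_univ _)⟩
  choose best hbestspec using hbest
  have hUnone : ∀ θ, U θ none = vfun u' θ (Dq μ' θ (margO μ')) := by
    intro θ
    rw [hU]
    simp only [Option.elim, Xn, tn]
    rw [PMutil_single]
    ring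
  refine ⟨fun θ => Xn (best θ), fun θ => (1 - s) * tn (best θ),
    ⟨fun θ => hfeasXn _, fun θ => mul_nonneg (by linarith) (htn0 _), fun θ => ?_,
      fun θ θ' _ => ?_⟩, ?_⟩
  · have h := hbestspec θ none
    rw [hUnone θ] at h
    exact h
  · exact hbestspec θ (best θ')
  -- revenue bound
  intro θ hm hm'
  show margT μ θ * t θ
      - (|margT μ' θ - margT μ θ| * (2 * Mu / mp) + s * (2 * Mu / mp)
         + 2 * (γ θ + 2 * e * (Mu / mp) + dp * (Mu / mp)) / s)
      ≤ margT μ' θ * ((1 - s) * tn (best θ))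
  set m := margT μ θ
  set m' := margT μ' θ
  set K := 2 * Mu / mp with hK
  set η := γ θ + 2 * e * (Mu / mp) + dp * (Mu / mp) with hη
  set o := best θ with ho
  -- old option values
  set Ao : Option Θ → ℝ := fun o' =>
    Option.elim o' (vfun u θ (Dq μ θ (margO μ))) (fun β => PMutil u μ θ (x β)) with hAo
  have hii : ∀ o', Ao o' / m - tn o' ≤ PMutil u μ θ (x θ) / m - t θ := by
    intro o'
    have base : ∀ o', Ao o' - m * tn o' ≤ PMutil u μ θ (x θ) - m * t θ := by
      intro o'
      cases o' with
      | none => simpa [Ao, tn] using hIR θ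
      | some β =>
          rcases eq_or_ne β θ with rfl | hne
          · simp [Ao, tn]
          · exact hIC θ β hne
    have hexp : ∀ (X c : ℝ), (X / m - c) * m = X - c * m := fun X c => by
      rw [sub_mul, div_mul_cancel₀ _ hm.ne']
    apply (mul_le_mul_iff_left₀ hm).1
    rw [hexp, hexp]
    have hb := base o'
    nlinarith [hb]
  have hWb : ∀ ω a, |Wfun u μ θ ω a| ≤ Mu / mp := abs_Wfun_le hμ hMu hmp hp hm
  have hWb' : ∀ ω a, |Wfun u' μ' θ ω a| ≤ Mu / mp := abs_Wfun_le hμ' hMu' hmp hp' hm'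
  have hMump : 0 ≤ Mu / mp := div_nonneg hMu0 hmp.le
  have hiii : ∀ o', |PMutil u' μ' θ (Xn o') / m' - Ao o' / m| ≤ η := by
    intro o'
    cases o' with
    | none =>
        show |PMutil u' μ' θ (Finsupp.single (margO μ') 1) / m'
          - vfun u θ (Dq μ θ (margO μ)) / m| ≤ η
        rw [PMutil_single, mul_one, vfun_Dq_div hm', vfun_Dq_div hm]
        have h1 : |vfun (Wfun u' μ') θ (margO μ') - vfun (Wfun u μ) θ (margO μ')| ≤ γ θ :=
          abs_vfun_W_sub_le hpd' (hΓ θ hm hm')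
        have h2 : |vfun (Wfun u μ) θ (margO μ') - vfun (Wfun u μ) θ (margO μ)|
            ≤ (Mu / mp) * ∑ ω, |margO μ' ω - margO μ ω| := abs_vfun_W_lip hWb
        have h3 : (Mu / mp) * ∑ ω, |margO μ' ω - margO μ ω| ≤ (Mu / mp) * dp :=
          mul_le_mul_of_nonneg_left hdp hMump
        have h4 := abs_sub_le (vfun (Wfun u' μ') θ (margO μ'))
          (vfun (Wfun u μ) θ (margO μ')) (vfun (Wfun u μ) θ (margO μ))
        have he0 : 0 ≤ 2 * e * (Mu / mp) := by positivity
        rw [hη]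
        nlinarith
    | some β =>
        show |PMutil u' μ' θ ((1 - e) • x β + Finsupp.single qh e) / m'
          - PMutil u μ θ (x β) / m| ≤ η
        rw [PMutil_mix]
        have hA : |PMutil u' μ' θ (x β) / m' - PMutil u μ θ (x β) / m| ≤ γ θ := by
          rw [PMutil_div hm', PMutil_div hm, ← Finset.sum_sub_distrib]
          have hterm : ∀ q ∈ (x β).support,
              vfun (Wfun u' μ') θ q * (x β) q - vfun (Wfun u μ) θ q * (x β) q
              = (vfun (Wfun u' μ') θ q - vfun (Wfun u μ) θ q) * (x β) q := fun q _ => by ring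
          rw [Finset.sum_congr rfl hterm]
          have := abs_weighted_le (sf := (x β).support)
            (f := fun q => vfun (Wfun u' μ') θ q - vfun (Wfun u μ) θ q)
            (w := fun q => (x β) q)
            (fun q hq => abs_vfun_W_sub_le ((hfeas β).1 q hq) (hΓ θ hm hm'))
            (fun q _ => (hfeas β).2.1 q) (hfeas β).2.2.1
          simpa using this
        have hB : |vfun u' θ (Dq μ' θ qh) / m'| ≤ Mu / mp := by
          rw [vfun_Dq_div hm']
          exact abs_vfun_W_le hqhd hWb'
        have hC : |PMutil u μ θ (x β) / m| ≤ Mu / mp :=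
          abs_PMutil_div_le (hfeas β) hm hWb
        have expand : ((1 - e) * PMutil u' μ' θ (x β) + vfun u' θ (Dq μ' θ qh) * e) / m'
            - PMutil u μ θ (x β) / m
            = (1 - e) * (PMutil u' μ' θ (x β) / m' - PMutil u μ θ (x β) / m)
              + e * (vfun u' θ (Dq μ' θ qh) / m' - PMutil u μ θ (x β) / m) := by
          field_simp
          ring
        rw [expand]
        have t1 : |(1 - e) * (PMutil u' μ' θ (x β) / m' - PMutil u μ θ (x β) / m)|
            ≤ (1 - e) * γ θ := by
          rw [abs_mul, abs_of_nonneg (by linarith : (0:ℝ) ≤ 1 - e)]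
          exact mul_le_mul_of_nonneg_left hA (by linarith)
        have t2 : |e * (vfun u' θ (Dq μ' θ qh) / m' - PMutil u μ θ (x β) / m)|
            ≤ e * (Mu / mp + Mu / mp) := by
          rw [abs_mul, abs_of_pos he]
          apply mul_le_mul_of_nonneg_left _ he.le
          calc |vfun u' θ (Dq μ' θ qh) / m' - PMutil u μ θ (x β) / m|
              ≤ |vfun u' θ (Dq μ' θ qh) / m'| + |PMutil u μ θ (x β) / m| := abs_sub _ _
            _ ≤ Mu / mp + Mu / mp := add_le_add hB hC
        have tri := abs_add_le ((1 - e) * (PMutil u' μ' θ (x β) / m' - PMutil u μ θ (x β) / m))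
          (e * (vfun u' θ (Dq μ' θ qh) / m' - PMutil u μ θ (x β) / m))
        have hdpmp : 0 ≤ dp * (Mu / mp) := mul_nonneg hdp0 hMump
        have hγθ := hγ θ
        rw [hη]
        nlinarith
  -- the argmax inequality at (some θ)
  have hi := hbestspec θ (some θ)
  rw [hU] at hi
  simp only at hi
  have htsome : tn (some θ) = t θ := rfl
  rw [htsome] at hi
  have hi' : PMutil u' μ' θ (Xn (some θ)) / m' - (1 - s) * t θ
      ≤ PMutil u' μ' θ (Xn o) / m' - (1 - s) * tn o := by
    have hexp' : ∀ (X c : ℝ), (X / m' - c) * m' = X - c * m' := fun X c => by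
      rw [sub_mul, div_mul_cancel₀ _ hm'.ne']
    apply (mul_le_mul_iff_left₀ hm').1
    rw [hexp', hexp']
    nlinarith [hi]
  have e1 := (abs_le.1 (hiii (some θ))).1
  have e2 := (abs_le.1 (hiii o)).2
  have e3 := hii o
  have hAsome : Ao (some θ) = PMutil u μ θ (x θ) := rfl
  rw [hAsome] at e1
  -- derive price lower bound
  have hiexp : PMutil u' μ' θ (Xn (some θ)) / m' - t θ + s * t θ
      ≤ PMutil u' μ' θ (Xn o) / m' - tn o + s * tn o := by
    have r1 : (1 - s) * t θ = t θ - s * t θ := by ring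
    have r2 : (1 - s) * tn o = tn o - s * tn o := by ring
    rw [r1, r2] at hi'
    linarith
  have k1 : PMutil u' μ' θ (Xn o) / m' ≤ PMutil u μ θ (x θ) / m - t θ + tn o + η := by
    linarith [e2, e3]
  have k2 : PMutil u μ θ (x θ) / m ≤ PMutil u' μ' θ (Xn (some θ)) / m' + η := by
    linarith [e1]
  have htK : t θ ≤ K := price_le_of_valid ⟨hfeas, ht0, hIR, hIC⟩ hμ hMu hmp hp hm
  have hm'1 : m' ≤ 1 := margT_le_one hμ' θ
  have hm'0 : (0:ℝ) ≤ m' := hm'.le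
  have htno : 0 ≤ tn o := htn0 o
  have hηnn : 0 ≤ η := by
    rw [hη]
    have := hγ θ
    have h1 : 0 ≤ 2 * e * (Mu / mp) := by positivity
    have h2 : 0 ≤ dp * (Mu / mp) := mul_nonneg hdp0 (div_nonneg hMu0 hmp.le)
    linarith
  have hKnn : 0 ≤ K := by rw [hK]; positivity
  clear_value m m' K η Ao tn Xn U
  clear_value o
  have key : s * t θ - s * tn o ≤ 2 * η := by linarith only [hiexp, k1, k2]
  have hto : t θ - 2 * η / s ≤ tn o := by
    have h1 : t θ - tn o ≤ 2 * η / s := by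
      rw [le_div_iff₀ hs]
      have hr : (t θ - tn o) * s = s * t θ - s * tn o := by ring
      rw [hr]
      linarith
    linarith
  have habs : m - m' ≤ |m' - m| := by rw [abs_sub_comm]; exact le_abs_self _
  have habs0 : 0 ≤ |m' - m| := abs_nonneg _
  have ht0θ := ht0 θ
  have h2ηs : 0 ≤ 2 * η / s := div_nonneg (by linarith) hs.le
  have c1 : m' * ((1 - s) * (t θ - 2 * η / s)) ≤ m' * ((1 - s) * tn o) :=
    mul_le_mul_of_nonneg_left (mul_le_mul_of_nonneg_left hto (by linarith)) hm'0
  have hle : m' * (1 - s) ≤ 1 := mul_le_one₀ hm'1 (by linarith) (by linarith)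
  have c3 : m' * (1 - s) * (2 * η / s) ≤ 2 * η / s := by
    calc m' * (1 - s) * (2 * η / s) ≤ 1 * (2 * η / s) :=
          mul_le_mul_of_nonneg_right hle h2ηs
      _ = 2 * η / s := one_mul _
  have hmt1 : m' * t θ ≤ t θ := by nlinarith
  have hmt : m' * t θ ≤ K := hmt1.trans htK
  have c4 : m' * t θ - s * K ≤ m' * (1 - s) * t θ := by
    have hh := mul_le_mul_of_nonneg_left hmt hs.le
    have hr : m' * (1 - s) * t θ = m' * t θ - s * (m' * t θ) := by ring
    rw [hr]
    linarith
  have c5 : m * t θ - |m' - m| * K ≤ m' * t θ := by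
    have d1 : (m - m') * t θ ≤ |m' - m| * t θ := mul_le_mul_of_nonneg_right habs ht0θ
    have d2 : |m' - m| * t θ ≤ |m' - m| * K := mul_le_mul_of_nonneg_left htK habs0
    nlinarith
  have cexp : m' * ((1 - s) * (t θ - 2 * η / s))
      = m' * (1 - s) * t θ - m' * (1 - s) * (2 * η / s) := by ring
  rw [cexp] at c1
  linarith

end Core
lemma budget_aux {a e' : ℝ} (ha : 0 ≤ a) (he : 0 < e') : a * (e' / (a + 1)) ≤ e' := by
  rw [← mul_div_assoc, div_le_iff₀ (by positivity)]
  nlinarith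
open Topology

open Topology in
set_option maxHeartbeats 2000000 in
/-- The optimal Pricing Mappings revenue `R_c` is continuous on the set
`C°` of contexts whose prior has positive `Ω`-marginal. -/
theorem Rc_continuous :
    ContinuousOn (fun p : (Θ → Ω → A → ℝ) × (Ω → Θ → ℝ) => Rc p.1 p.2)
      {p | IsJoint p.2 ∧ ∀ ω, 0 < margO p.2 ω} := by
  classical
  intro P₀ hP₀
  obtain ⟨hJ₀, hpos₀⟩ := hP₀
  haveI hΩne : Nonempty Ω := by
    by_contra h
    rw [not_nonempty_iff] at h
    have h2 := hJ₀.2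
    rw [Finset.univ_eq_empty, Finset.sum_empty] at h2
    norm_num at h2
  haveI hΘne : Nonempty Θ := by
    by_contra h
    rw [not_nonempty_iff] at h
    have h2 := hJ₀.2
    simp only [Finset.univ_eq_empty, Finset.sum_empty, Finset.sum_const_zero] at h2
    norm_num at h2
  unfold ContinuousWithinAt
  rw [Metric.tendsto_nhds]
  intro ε hε
  -- constants
  obtain ⟨m, hm0, hmle⟩ : ∃ m : ℝ, 0 < m ∧ ∀ ω, m ≤ margO P₀.2 ω := by
    refine ⟨univ.inf' univ_nonempty (margO P₀.2), ?_, fun ω => Finset.inf'_le _ (mem_univ ω)⟩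
    rw [Finset.lt_inf'_iff]
    exact fun ω _ => hpos₀ ω
  obtain ⟨Mu, hMu0, hMub⟩ : ∃ Mu : ℝ, 0 ≤ Mu ∧ ∀ θ ω a, |P₀.1 θ ω a| + 1 ≤ Mu := by
    refine ⟨1 + univ.sup' univ_nonempty (fun z : Θ × Ω × A => |P₀.1 z.1 z.2.1 z.2.2|), ?_, ?_⟩
    · obtain ⟨z⟩ : Nonempty (Θ × Ω × A) := inferInstance
      have := Finset.le_sup' (fun z : Θ × Ω × A => |P₀.1 z.1 z.2.1 z.2.2|) (mem_univ z)
      have h0 := abs_nonneg (P₀.1 z.1 z.2.1 z.2.2)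
      linarith
    · intro θ ω a
      have := Finset.le_sup' (fun z : Θ × Ω × A => |P₀.1 z.1 z.2.1 z.2.2|) (mem_univ (θ, ω, a))
      simp only at this
      linarith
  have hMuP₀ : ∀ θ ω a, |P₀.1 θ ω a| ≤ Mu := fun θ ω a => by linarith [hMub θ ω a]
  have hmp0 : (0:ℝ) < m / 2 := by linarith
  have hpP₀ : ∀ ω, m / 2 ≤ margO P₀.2 ω := fun ω => by linarith [hmle ω]
  have hKnn : (0:ℝ) ≤ 2 * Mu / (m / 2) := div_nonneg (by linarith) (by linarith)
  have hRnn : (0:ℝ) ≤ Mu / (m / 2) := div_nonneg hMu0 (by linarith)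
  have hcard0 : (0:ℝ) ≤ (Fintype.card Θ : ℝ) := Nat.cast_nonneg _
  -- choose s
  obtain ⟨s, hs0, hs1, hsK⟩ : ∃ s : ℝ, 0 < s ∧ s ≤ 1 ∧
      (Fintype.card Θ : ℝ) * (s * (2 * Mu / (m / 2))) ≤ ε / 4 := by
    have hcoef : (0:ℝ) ≤ (Fintype.card Θ : ℝ) * (2 * Mu / (m / 2)) := mul_nonneg hcard0 hKnn
    refine ⟨min 1 ((ε/4) / ((Fintype.card Θ : ℝ) * (2 * Mu / (m / 2)) + 1)),
      lt_min one_pos (by positivity), min_le_left _ _, ?_⟩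
    have h1 := min_le_right (1:ℝ) ((ε/4) / ((Fintype.card Θ : ℝ) * (2 * Mu / (m / 2)) + 1))
    have h2 := budget_aux hcoef (show (0:ℝ) < ε/4 by linarith)
    have h3 : (Fintype.card Θ : ℝ) * (min 1 ((ε/4) / ((Fintype.card Θ : ℝ) * (2 * Mu / (m / 2)) + 1)) * (2 * Mu / (m / 2)))
        ≤ (Fintype.card Θ : ℝ) * (2 * Mu / (m / 2)) * ((ε/4) / ((Fintype.card Θ : ℝ) * (2 * Mu / (m / 2)) + 1)) := by
      have := mul_le_mul_of_nonneg_left h1 hcoef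
      nlinarith [this]
    linarith
  -- the four bars
  obtain ⟨tbar, htb0, htbB⟩ : ∃ tbar : ℝ, 0 < tbar ∧
      (Fintype.card Θ : ℝ) * (2 * Mu / (m / 2)) * tbar ≤ ε / 16 := by
    have hcoef : (0:ℝ) ≤ (Fintype.card Θ : ℝ) * (2 * Mu / (m / 2)) := mul_nonneg hcard0 hKnn
    exact ⟨(ε/16) / ((Fintype.card Θ : ℝ) * (2 * Mu / (m / 2)) + 1), by positivity,
      budget_aux hcoef (by linarith)⟩
  obtain ⟨gbar, hgb0, hgbB⟩ : ∃ gbar : ℝ, 0 < gbar ∧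
      (2 * (Fintype.card Θ : ℝ) / s) * gbar ≤ ε / 16 := by
    have hcoef : (0:ℝ) ≤ 2 * (Fintype.card Θ : ℝ) / s := by positivity
    exact ⟨(ε/16) / (2 * (Fintype.card Θ : ℝ) / s + 1), by positivity,
      budget_aux hcoef (by linarith)⟩
  obtain ⟨κ, hκ0, hκB⟩ : ∃ κ : ℝ, 0 < κ ∧
      (2 * (Fintype.card Θ : ℝ) / s) * (2 * (Mu / (m / 2))) * κ ≤ ε / 16 := by
    have hcoef : (0:ℝ) ≤ (2 * (Fintype.card Θ : ℝ) / s) * (2 * (Mu / (m / 2))) := by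
      apply mul_nonneg (by positivity)
      linarith
    exact ⟨(ε/16) / ((2 * (Fintype.card Θ : ℝ) / s) * (2 * (Mu / (m / 2))) + 1), by positivity,
      budget_aux hcoef (by linarith)⟩
  obtain ⟨dbar, hdb0, hdbB⟩ : ∃ dbar : ℝ, 0 < dbar ∧
      (2 * (Fintype.card Θ : ℝ) / s) * ((Mu / (m / 2)) * (4 / m + 1)) * dbar ≤ ε / 16 := by
    have hcoef : (0:ℝ) ≤ (2 * (Fintype.card Θ : ℝ) / s) * ((Mu / (m / 2)) * (4 / m + 1)) := by
      apply mul_nonneg (by positivity)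
      apply mul_nonneg hRnn
      positivity
    exact ⟨(ε/16) / ((2 * (Fintype.card Θ : ℝ) / s) * ((Mu / (m / 2)) * (4 / m + 1)) + 1),
      by positivity, budget_aux hcoef (by linarith)⟩
  -- the mixing weight
  obtain ⟨e, hedef⟩ : ∃ e : ℝ, e = min 1 (2 * dbar / m + κ) := ⟨_, rfl⟩
  have he0 : 0 < e := hedef ▸ lt_min one_pos (by positivity)
  have he1 : e ≤ 1 := hedef ▸ min_le_left _ _
  have heub : e ≤ 2 * dbar / m + κ := hedef ▸ min_le_right _ _
  -- error budget
  obtain ⟨E1, hE1def⟩ : ∃ E1 : ℝ, E1 = tbar * (2 * Mu / (m / 2)) + s * (2 * Mu / (m / 2))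
      + 2 * (gbar + 2 * e * (Mu / (m / 2)) + dbar * (Mu / (m / 2))) / s := ⟨_, rfl⟩
  obtain ⟨E2, hE2def⟩ : ∃ E2 : ℝ, E2 = tbar * (2 * Mu / (m / 2)) := ⟨_, rfl⟩
  have hE1nn : 0 ≤ E1 := by
    rw [hE1def]
    have h1 : 0 ≤ tbar * (2 * Mu / (m / 2)) := mul_nonneg htb0.le hKnn
    have h2 : 0 ≤ s * (2 * Mu / (m / 2)) := mul_nonneg hs0.le hKnn
    have h3 : 0 ≤ 2 * e * (Mu / (m / 2)) := mul_nonneg (by linarith) hRnn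
    have h4 : 0 ≤ dbar * (Mu / (m / 2)) := mul_nonneg hdb0.le hRnn
    have h5 : 0 ≤ 2 * (gbar + 2 * e * (Mu / (m / 2)) + dbar * (Mu / (m / 2))) / s :=
      div_nonneg (by linarith) hs0.le
    linarith
  have hE2nn : 0 ≤ E2 := by rw [hE2def]; exact mul_nonneg htb0.le hKnn
  have hEtot : (Fintype.card Θ : ℝ) * (E1 + E2) < ε := by
    have hsplit : (Fintype.card Θ : ℝ) * E1 = (Fintype.card Θ : ℝ) * (2 * Mu / (m / 2)) * tbar + (Fintype.card Θ : ℝ) * (s * (2 * Mu / (m / 2)))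
        + (2 * (Fintype.card Θ : ℝ) / s) * gbar + ((2 * (Fintype.card Θ : ℝ) / s) * (2 * (Mu / (m / 2)))) * e + ((2 * (Fintype.card Θ : ℝ) / s) * ((Mu / (m / 2)) * 1)) * dbar
        + 0 := by
      rw [hE1def]
      field_simp
      ring
    have hcoefC : (0:ℝ) ≤ (2 * (Fintype.card Θ : ℝ) / s) * (2 * (Mu / (m / 2))) := by
      apply mul_nonneg (by positivity)
      linarith
    have h1 : ((2 * (Fintype.card Θ : ℝ) / s) * (2 * (Mu / (m / 2)))) * e ≤ ((2 * (Fintype.card Θ : ℝ) / s) * (2 * (Mu / (m / 2)))) * (2 * dbar / m + κ) :=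
      mul_le_mul_of_nonneg_left heub hcoefC
    have hring1 : ((2 * (Fintype.card Θ : ℝ) / s) * (2 * (Mu / (m / 2)))) * (2 * dbar / m + κ)
        = ((2 * (Fintype.card Θ : ℝ) / s) * (2 * (Mu / (m / 2)))) * (2 * dbar / m) + ((2 * (Fintype.card Θ : ℝ) / s) * (2 * (Mu / (m / 2)))) * κ := by ring
    have hring2 : ((2 * (Fintype.card Θ : ℝ) / s) * (2 * (Mu / (m / 2)))) * (2 * dbar / m) + ((2 * (Fintype.card Θ : ℝ) / s) * ((Mu / (m / 2)) * 1)) * dbar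
        = (2 * (Fintype.card Θ : ℝ) / s) * ((Mu / (m / 2)) * (4 / m + 1)) * dbar := by
      field_simp
      ring
    have hE2exp : (Fintype.card Θ : ℝ) * E2 = (Fintype.card Θ : ℝ) * (2 * Mu / (m / 2)) * tbar := by rw [hE2def]; ring
    have hfin : (Fintype.card Θ : ℝ) * (E1 + E2) = (Fintype.card Θ : ℝ) * E1 + (Fintype.card Θ : ℝ) * E2 := by ring
    linarith [htbB, hsK, hgbB, hκB, hdbB, hε]
  -- continuity of marginals
  have cmargT : ∀ θ : Θ, Continuous fun P : (Θ → Ω → A → ℝ) × (Ω → Θ → ℝ) => margT P.2 θ := by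
    intro θ
    show Continuous fun P : (Θ → Ω → A → ℝ) × (Ω → Θ → ℝ) => ∑ ω, P.2 ω θ
    exact continuous_finset_sum _ fun ω _ =>
      (continuous_apply θ).comp ((continuous_apply ω).comp continuous_snd)
  have cmargO : ∀ ω : Ω, Continuous fun P : (Θ → Ω → A → ℝ) × (Ω → Θ → ℝ) => margO P.2 ω := by
    intro ω
    show Continuous fun P : (Θ → Ω → A → ℝ) × (Ω → Θ → ℝ) => ∑ θ, P.2 ω θ
    exact continuous_finset_sum _ fun θ _ =>
      (continuous_apply θ).comp ((continuous_apply ω).comp continuous_snd)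
  -- choose δ
  obtain ⟨δ, hδ0, hδ1, hδm⟩ : ∃ δ : ℝ, 0 < δ ∧ δ ≤ 1 ∧ (Fintype.card Θ : ℝ) * δ ≤ m / 2 := by
    refine ⟨min 1 ((m / 2) / ((Fintype.card Θ : ℝ) + 1)), lt_min one_pos (by positivity),
      min_le_left _ _, ?_⟩
    have h1 := min_le_right (1:ℝ) ((m / 2) / ((Fintype.card Θ : ℝ) + 1))
    have h2 := budget_aux hcard0 hmp0
    nlinarith [mul_le_mul_of_nonneg_left h1 hcard0]
  -- eventual facts
  have ev1 : ∀ᶠ P : (Θ → Ω → A → ℝ) × (Ω → Θ → ℝ) in 𝓝 P₀, dist P P₀ < δ := Metric.ball_mem_nhds P₀ hδ0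
  have ev2 : ∀ᶠ P : (Θ → Ω → A → ℝ) × (Ω → Θ → ℝ) in 𝓝 P₀, (∑ ω, |margO P.2 ω - margO P₀.2 ω|) < dbar := by
    have h : Tendsto (fun P : (Θ → Ω → A → ℝ) × (Ω → Θ → ℝ) => ∑ ω, |margO P.2 ω - margO P₀.2 ω|)
        (𝓝 P₀) (𝓝 0) := by
      have h2 : Continuous fun P : (Θ → Ω → A → ℝ) × (Ω → Θ → ℝ) =>
          ∑ ω, |margO P.2 ω - margO P₀.2 ω| := by
        apply continuous_finset_sum
        intro ω _
        exact ((cmargO ω).sub continuous_const).abs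
      have h3 := h2.tendsto P₀
      simpa using h3
    exact h.eventually (gt_mem_nhds hdb0)
  have ev3 : ∀ᶠ P : (Θ → Ω → A → ℝ) × (Ω → Θ → ℝ) in 𝓝 P₀, ∀ θ, 0 < margT P₀.2 θ → 0 < margT P.2 θ := by
    rw [Filter.eventually_all]
    intro θ
    by_cases hθ : 0 < margT P₀.2 θ
    · have h := ((cmargT θ).tendsto P₀).eventually (eventually_gt_nhds hθ)
      exact h.mono fun P hP _ => hP
    · exact Filter.Eventually.of_forall fun P h => absurd h hθ
  have ev4 : ∀ᶠ P : (Θ → Ω → A → ℝ) × (Ω → Θ → ℝ) in 𝓝 P₀, ∀ θ, |margT P.2 θ - margT P₀.2 θ| < tbar := by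
    rw [Filter.eventually_all]
    intro θ
    have h : Tendsto (fun P : (Θ → Ω → A → ℝ) × (Ω → Θ → ℝ) => |margT P.2 θ - margT P₀.2 θ|) (𝓝 P₀) (𝓝 0) := by
      have h2 : Continuous fun P : (Θ → Ω → A → ℝ) × (Ω → Θ → ℝ) =>
          |margT P.2 θ - margT P₀.2 θ| := ((cmargT θ).sub continuous_const).abs
      have h3 := h2.tendsto P₀
      simpa using h3
    exact h.eventually (gt_mem_nhds htb0)
  have ev5 : ∀ᶠ P : (Θ → Ω → A → ℝ) × (Ω → Θ → ℝ) in 𝓝 P₀, ∀ θ, 0 < margT P₀.2 θ →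
      (∑ z : Ω × A, |Wfun P.1 P.2 θ z.1 z.2 - Wfun P₀.1 P₀.2 θ z.1 z.2|) < gbar := by
    rw [Filter.eventually_all]
    intro θ
    by_cases hθ : 0 < margT P₀.2 θ
    · have hW : ∀ z : Ω × A, Tendsto
          (fun P : (Θ → Ω → A → ℝ) × (Ω → Θ → ℝ) => |Wfun P.1 P.2 θ z.1 z.2 - Wfun P₀.1 P₀.2 θ z.1 z.2|)
          (𝓝 P₀) (𝓝 0) := by
        intro z
        have hnum : Continuous fun P : (Θ → Ω → A → ℝ) × (Ω → Θ → ℝ) => P.2 z.1 θ * P.1 θ z.1 z.2 := by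
          fun_prop
        have hden : Continuous fun P : (Θ → Ω → A → ℝ) × (Ω → Θ → ℝ) => margT P.2 θ * margO P.2 z.1 :=
          (cmargT θ).mul (cmargO z.1)
        have hden0 : margT P₀.2 θ * margO P₀.2 z.1 ≠ 0 := (mul_pos hθ (hpos₀ z.1)).ne'
        have hWca : ContinuousAt (fun P : (Θ → Ω → A → ℝ) × (Ω → Θ → ℝ) => Wfun P.1 P.2 θ z.1 z.2) P₀ := by
          show ContinuousAt (fun P : (Θ → Ω → A → ℝ) × (Ω → Θ → ℝ) =>
            P.2 z.1 θ * P.1 θ z.1 z.2 / (margT P.2 θ * margO P.2 z.1)) P₀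
          exact hnum.continuousAt.div hden.continuousAt hden0
        have h2 : Tendsto (fun P : (Θ → Ω → A → ℝ) × (Ω → Θ → ℝ) => |Wfun P.1 P.2 θ z.1 z.2
            - Wfun P₀.1 P₀.2 θ z.1 z.2|) (𝓝 P₀)
            (𝓝 |Wfun P₀.1 P₀.2 θ z.1 z.2 - Wfun P₀.1 P₀.2 θ z.1 z.2|) :=
          (hWca.sub continuousAt_const).abs
        simpa using h2
      have h : Tendsto (fun P : (Θ → Ω → A → ℝ) × (Ω → Θ → ℝ) =>
          ∑ z : Ω × A, |Wfun P.1 P.2 θ z.1 z.2 - Wfun P₀.1 P₀.2 θ z.1 z.2|)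
          (𝓝 P₀) (𝓝 0) := by
        have h2 := tendsto_finset_sum (univ : Finset (Ω × A)) (fun z _ => hW z)
        simpa using h2
      exact (h.eventually (gt_mem_nhds hgb0)).mono fun P hP _ => hP
    · exact Filter.Eventually.of_forall fun P h => absurd h hθ
  -- main
  filter_upwards [self_mem_nhdsWithin, ev1.filter_mono nhdsWithin_le_nhds,
    ev2.filter_mono nhdsWithin_le_nhds, ev3.filter_mono nhdsWithin_le_nhds,
    ev4.filter_mono nhdsWithin_le_nhds, ev5.filter_mono nhdsWithin_le_nhds]
    with P hPS hP1 hP2 hP3 hP4 hP5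
  obtain ⟨hJP, hposP⟩ := hPS
  have hcomp_u : ∀ θ ω a, |P.1 θ ω a - P₀.1 θ ω a| ≤ dist P P₀ := by
    intro θ ω a
    rw [← Real.dist_eq]
    calc dist (P.1 θ ω a) (P₀.1 θ ω a) ≤ dist (P.1 θ ω) (P₀.1 θ ω) := dist_le_pi_dist _ _ a
      _ ≤ dist (P.1 θ) (P₀.1 θ) := dist_le_pi_dist _ _ ω
      _ ≤ dist P.1 P₀.1 := dist_le_pi_dist _ _ θ
      _ ≤ dist P P₀ := by rw [Prod.dist_eq]; exact le_max_left _ _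
  have hcomp_μ : ∀ ω θ, |P.2 ω θ - P₀.2 ω θ| ≤ dist P P₀ := by
    intro ω θ
    rw [← Real.dist_eq]
    calc dist (P.2 ω θ) (P₀.2 ω θ) ≤ dist (P.2 ω) (P₀.2 ω) := dist_le_pi_dist _ _ θ
      _ ≤ dist P.2 P₀.2 := dist_le_pi_dist _ _ ω
      _ ≤ dist P P₀ := by rw [Prod.dist_eq]; exact le_max_right _ _
  have hMuP : ∀ θ ω a, |P.1 θ ω a| ≤ Mu := by
    intro θ ω a
    have h1 := hcomp_u θ ω a
    have h2 := hMub θ ω a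
    have h3 := abs_sub_abs_le_abs_sub (P.1 θ ω a) (P₀.1 θ ω a)
    linarith [hP1]
  have hmargOd : ∀ ω, |margO P.2 ω - margO P₀.2 ω| ≤ (Fintype.card Θ : ℝ) * δ := by
    intro ω
    have h1 : margO P.2 ω - margO P₀.2 ω = ∑ θ, (P.2 ω θ - P₀.2 ω θ) := by
      rw [margO, margO, Finset.sum_sub_distrib]
    calc |margO P.2 ω - margO P₀.2 ω| ≤ ∑ θ, |P.2 ω θ - P₀.2 ω θ| := by
          rw [h1]; exact Finset.abs_sum_le_sum_abs _ _
      _ ≤ ∑ _θ : Θ, δ := Finset.sum_le_sum fun θ _ =>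
            le_of_lt (lt_of_le_of_lt (hcomp_μ ω θ) hP1)
      _ = (Fintype.card Θ : ℝ) * δ := by
          rw [Finset.sum_const, Finset.card_univ, nsmul_eq_mul]
  have hpP : ∀ ω, m / 2 ≤ margO P.2 ω := by
    intro ω
    have h1 := (abs_le.1 (hmargOd ω)).1
    have h2 := hmle ω
    linarith [hδm]
  have hdpf : ∑ ω, |margO P.2 ω - margO P₀.2 ω| ≤ dbar := hP2.le
  have hdpf' : ∑ ω, |margO P₀.2 ω - margO P.2 ω| ≤ dbar := by
    rw [Finset.sum_congr rfl fun ω _ => abs_sub_comm (margO P₀.2 ω) (margO P.2 ω)]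
    exact hdpf
  have habs_single : ∀ ω, |margO P.2 ω - margO P₀.2 ω| ≤ dbar := by
    intro ω
    refine le_trans ?_ hdpf
    exact Finset.single_le_sum (f := fun ω' => |margO P.2 ω' - margO P₀.2 ω'|)
      (fun ω' _ => abs_nonneg _) (mem_univ ω)
  have hmixA : ∀ ω, (1 - e) * margO P.2 ω ≤ margO P₀.2 ω := by
    intro ω
    rcases min_cases (1:ℝ) (2 * dbar / m + κ) with ⟨hmin, -⟩ | ⟨hmin, -⟩ <;>
      rw [hedef, hmin]
    · have := (isDist_margO hJ₀).1 ω
      linarith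
    · have h1 := (abs_le.1 (habs_single ω)).2
      have h2 := hpP ω
      have h3 : (2 * dbar / m) * (m / 2) = dbar := by field_simp
      have h4 : (2 * dbar / m) * (m / 2) ≤ (2 * dbar / m) * margO P.2 ω :=
        mul_le_mul_of_nonneg_left h2 (by positivity)
      have h5 : 0 ≤ κ * margO P.2 ω := mul_nonneg hκ0.le (by linarith)
      nlinarith
  have hmixB : ∀ ω, (1 - e) * margO P₀.2 ω ≤ margO P.2 ω := by
    intro ω
    rcases min_cases (1:ℝ) (2 * dbar / m + κ) with ⟨hmin, -⟩ | ⟨hmin, -⟩ <;>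
      rw [hedef, hmin]
    · have h0 := hpP ω
      have : 0 ≤ margO P.2 ω := by linarith
      linarith
    · have h1 := (abs_le.1 (habs_single ω)).1
      have h2 := hmle ω
      have h3 : (2 * dbar / m) * m = 2 * dbar := by field_simp
      have h4 : (2 * dbar / m) * m ≤ (2 * dbar / m) * margO P₀.2 ω :=
        mul_le_mul_of_nonneg_left h2 (by positivity)
      have h5 : 0 ≤ κ * margO P₀.2 ω := mul_nonneg hκ0.le (by linarith [hmle ω, hm0])
      nlinarith
  -- bounded and nonempty revenue sets
  have hbdd₀ : BddAbove {r | ∃ x t, PMvalid P₀.1 P₀.2 x t ∧ r = PMrev P₀.2 t} :=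
    Rc_set_bdd _ hJ₀ hMuP₀ hmp0 hpP₀
  have hbddP : BddAbove {r | ∃ x t, PMvalid P.1 P.2 x t ∧ r = PMrev P.2 t} :=
    Rc_set_bdd _ hJP hMuP hmp0 hpP
  have hne₀ := Rc_set_nonempty P₀.1 hJ₀
  have hneP := Rc_set_nonempty P.1 hJP
  -- direction A : Rc P ≤ Rc P₀ + err
  have hsingleW : ∀ θ ω a, ∀ P' : (Θ → Ω → A → ℝ) × (Ω → Θ → ℝ),
      |Wfun P'.1 P'.2 θ ω a - Wfun P₀.1 P₀.2 θ ω a|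
        ≤ ∑ z : Ω × A, |Wfun P'.1 P'.2 θ z.1 z.2 - Wfun P₀.1 P₀.2 θ z.1 z.2| := by
    intro θ ω a P'
    have h2 := Finset.single_le_sum
      (f := fun z : Ω × A => |Wfun P'.1 P'.2 θ z.1 z.2 - Wfun P₀.1 P₀.2 θ z.1 z.2|)
      (fun z _ => abs_nonneg _) (mem_univ (ω, a))
    simpa using h2
  have hΓA : ∀ θ, 0 < margT P.2 θ → 0 < margT P₀.2 θ → ∀ ω a,
      |Wfun P₀.1 P₀.2 θ ω a - Wfun P.1 P.2 θ ω a| ≤ gbar := by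
    intro θ _ hm₀ ω a
    have h := hP5 θ hm₀
    have h2 := hsingleW θ ω a P
    rw [abs_sub_comm]
    linarith
  have hΓB : ∀ θ, 0 < margT P₀.2 θ → 0 < margT P.2 θ → ∀ ω a,
      |Wfun P.1 P.2 θ ω a - Wfun P₀.1 P₀.2 θ ω a| ≤ gbar := by
    intro θ hm₀ _ ω a
    have h := hP5 θ hm₀
    have h2 := hsingleW θ ω a P
    linarith
  have dirA : Rc P.1 P.2 ≤ Rc P₀.1 P₀.2 + (Fintype.card Θ : ℝ) * (E1 + E2) := by
    apply csSup_le hneP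
    rintro rv ⟨x, t, hval, rfl⟩
    obtain ⟨y, r, hvalnew, hrev⟩ := core_transfer (u := P.1) (μ := P.2) (u' := P₀.1)
      (μ' := P₀.2) (Mu := Mu) (mp := m / 2) (s := s) (e := e) (dp := dbar)
      (γ := fun _ => gbar) hJP hJ₀ hval hMu0 hMuP hMuP₀ hmp0 hpP hpP₀ hs0 hs1 he0 he1
      hmixA hdb0.le hdpf' (fun _ => hgb0.le) hΓA
    have hper : ∀ θ, margT P.2 θ * t θ - margT P₀.2 θ * r θ ≤ E1 + E2 := by
      intro θ
      by_cases hθ : 0 < margT P₀.2 θ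
      · have hmP : 0 < margT P.2 θ := hP3 θ hθ
        have hcore := hrev θ hmP hθ
        have habsd : |margT P₀.2 θ - margT P.2 θ| ≤ tbar := by
          rw [abs_sub_comm]; exact (hP4 θ).le
        have hb1 : |margT P₀.2 θ - margT P.2 θ| * (2 * Mu / (m / 2)) ≤ tbar * (2 * Mu / (m / 2)) :=
          mul_le_mul_of_nonneg_right habsd hKnn
        rw [hE1def] at hE1nn ⊢
        linarith [hE2nn]
      · have hm₀0 : margT P₀.2 θ = 0 := le_antisymm (not_lt.1 hθ) (margT_nonneg hJ₀ θ)
        have hr0 : 0 ≤ margT P₀.2 θ * r θ := mul_nonneg (margT_nonneg hJ₀ θ) (hvalnew.2.1 θ)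
        have hmP_le : margT P.2 θ ≤ tbar := by
          have h := hP4 θ
          rw [hm₀0, sub_zero] at h
          exact (le_abs_self _).trans h.le
        have hmt : margT P.2 θ * t θ ≤ tbar * (2 * Mu / (m / 2)) := by
          rcases lt_or_eq_of_le (margT_nonneg hJP θ) with hmp | hmp
          · have htle := price_le_of_valid hval hJP hMuP hmp0 hpP hmp
            exact mul_le_mul hmP_le htle (hval.2.1 θ) htb0.le
          · rw [← hmp, zero_mul]; exact mul_nonneg htb0.le hKnn
        rw [hE2def]
        linarith [hE1nn]
    have hsum : PMrev P.2 t - PMrev P₀.2 r ≤ (Fintype.card Θ : ℝ) * (E1 + E2) := by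
      rw [PMrev, PMrev, ← Finset.sum_sub_distrib]
      calc ∑ θ, (margT P.2 θ * t θ - margT P₀.2 θ * r θ) ≤ ∑ _θ : Θ, (E1 + E2) :=
            Finset.sum_le_sum fun θ _ => hper θ
        _ = (Fintype.card Θ : ℝ) * (E1 + E2) := by
            rw [Finset.sum_const, Finset.card_univ, nsmul_eq_mul]
    have hRc₀ : PMrev P₀.2 r ≤ Rc P₀.1 P₀.2 :=
      le_csSup hbdd₀ ⟨y, r, hvalnew, rfl⟩
    linarith
  -- direction B : Rc P₀ ≤ Rc P + err
  have dirB : Rc P₀.1 P₀.2 ≤ Rc P.1 P.2 + (Fintype.card Θ : ℝ) * (E1 + E2) := by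
    apply csSup_le hne₀
    rintro rv ⟨x, t, hval, rfl⟩
    obtain ⟨y, r, hvalnew, hrev⟩ := core_transfer (u := P₀.1) (μ := P₀.2) (u' := P.1)
      (μ' := P.2) (Mu := Mu) (mp := m / 2) (s := s) (e := e) (dp := dbar)
      (γ := fun _ => gbar) hJ₀ hJP hval hMu0 hMuP₀ hMuP hmp0 hpP₀ hpP hs0 hs1 he0 he1
      hmixB hdb0.le hdpf (fun _ => hgb0.le) hΓB
    have hper : ∀ θ, margT P₀.2 θ * t θ - margT P.2 θ * r θ ≤ E1 + E2 := by
      intro θ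
      by_cases hθ : 0 < margT P₀.2 θ
      · have hmP : 0 < margT P.2 θ := hP3 θ hθ
        have hcore := hrev θ hθ hmP
        have habsd : |margT P.2 θ - margT P₀.2 θ| ≤ tbar := (hP4 θ).le
        have hb1 : |margT P.2 θ - margT P₀.2 θ| * (2 * Mu / (m / 2)) ≤ tbar * (2 * Mu / (m / 2)) :=
          mul_le_mul_of_nonneg_right habsd hKnn
        rw [hE1def] at hE1nn ⊢
        linarith [hE2nn]
      · have hm₀0 : margT P₀.2 θ = 0 := le_antisymm (not_lt.1 hθ) (margT_nonneg hJ₀ θ)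
        have hr0 : 0 ≤ margT P.2 θ * r θ := mul_nonneg (margT_nonneg hJP θ) (hvalnew.2.1 θ)
        rw [hm₀0, zero_mul]
        linarith [hE1nn, hE2nn]
    have hsum : PMrev P₀.2 t - PMrev P.2 r ≤ (Fintype.card Θ : ℝ) * (E1 + E2) := by
      rw [PMrev, PMrev, ← Finset.sum_sub_distrib]
      calc ∑ θ, (margT P₀.2 θ * t θ - margT P.2 θ * r θ) ≤ ∑ _θ : Θ, (E1 + E2) :=
            Finset.sum_le_sum fun θ _ => hper θ
        _ = (Fintype.card Θ : ℝ) * (E1 + E2) := by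
            rw [Finset.sum_const, Finset.card_univ, nsmul_eq_mul]
    have hRcP : PMrev P.2 r ≤ Rc P.1 P.2 :=
      le_csSup hbddP ⟨y, r, hvalnew, rfl⟩
    linarith
  rw [Real.dist_eq, abs_sub_lt_iff]
  constructor <;> linarith [hEtot]
end
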